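/- arXiv:0809.2293 — 7 statements merged into one kernel-verified Lean document; each statement's English description precedes it below -/
import Mathlib

section
/- Let p be an odd prime and m ≥ 1 a natural number. For every unit x of ZMod (p^m) whose reduction modulo p equals 1, there exists a unique natural number y with 0 ≤ y < p^{m-1} such that (1+p)^y = x in ZMod (p^m). -/
lemma aux_dvd_iff (p : ℕ) (hp : p.Prime) (hodd : Odd p) (m : ℕ) (hm : 1 ≤ m) (n : ℕ) :
    ((p:ℤ) ^ m ∣ (1 + p : ℤ) ^ n - 1) ↔ p ^ (m - 1) ∣ n := by
  rcases Nat.eq_zero_or_pos n with rfl | hn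
  · simp
  have hppos : (0:ℤ) < p := by exact_mod_cast hp.pos
  have hx : ¬ (p:ℤ) ∣ (1 + p) := by
    intro h
    have h1 : (p:ℤ) ∣ 1 := (dvd_add_right (dvd_refl _)).mp (by rwa [add_comm] at h)
    exact hp.one_lt.ne' (by exact_mod_cast Int.eq_one_of_dvd_one hppos.le h1)
  have hxy : (p:ℤ) ∣ (1 + p) - 1 := by simp
  have key := Int.emultiplicity_pow_sub_pow hp hodd hxy hx n
  rw [one_pow, show (1 + (p:ℤ)) - 1 = p by ring] at key
  have h1 : emultiplicity ((p:ℤ)) ((p:ℤ)) = 1 :=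
    (Int.finiteMultiplicity_iff.mpr ⟨by simpa using hp.ne_one, hppos.ne'⟩).emultiplicity_self
  rw [h1] at key
  rw [pow_dvd_iff_le_emultiplicity, key, pow_dvd_iff_le_emultiplicity (a := p) (b := n)]
  obtain ⟨m, rfl⟩ : ∃ k, m = k + 1 := ⟨m - 1, by omega⟩
  simp only [Nat.add_sub_cancel, Nat.cast_add, Nat.cast_one, add_comm (1 : ℕ∞)]
  exact ENat.add_le_add_iff_right (by simp)

lemma aux_pow_eq_one_iff (p : ℕ) (hp : p.Prime) (hodd : Odd p) (m : ℕ) (hm : 1 ≤ m) (n : ℕ) :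
    (1 + p : ZMod (p ^ m)) ^ n = 1 ↔ p ^ (m - 1) ∣ n := by
  rw [← aux_dvd_iff p hp hodd m hm n]
  have : (1 + p : ZMod (p ^ m)) ^ n - 1 = (((1 + p : ℤ) ^ n - 1 : ℤ) : ZMod (p ^ m)) := by
    push_cast; ring
  rw [show ((p:ℤ) ^ m) = ((p ^ m : ℕ) : ℤ) by push_cast; ring,
    ← ZMod.intCast_zmod_eq_zero_iff_dvd, ← this, sub_eq_zero]

theorem stmt_4 (p : ℕ) (hp : p.Prime) (hodd : Odd p) (m : ℕ) (hm : 1 ≤ m)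
    (x : (ZMod (p ^ m))ˣ)
    (hx : ZMod.castHom (dvd_pow_self p (by omega : m ≠ 0)) (ZMod p)
        (x : ZMod (p ^ m)) = 1) :
    ∃! y : ℕ, y < p ^ (m - 1) ∧ ((1 + p : ZMod (p ^ m)) ^ y = (x : ZMod (p ^ m))) := by
  have hpm : 1 < p ^ m := Nat.one_lt_pow (by omega) hp.one_lt
  have : Fact (1 < p ^ m) := ⟨hpm⟩
  have : NeZero (p ^ m) := ⟨by omega⟩
  -- the unit u = 1 + p
  have hu : IsUnit (1 + p : ZMod (p ^ m)) := by
    have : ((1 + p : ℕ) : ZMod (p ^ m)) = (1 + p : ZMod (p ^ m)) := by push_cast; rfl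
    rw [← this, ZMod.isUnit_iff_coprime]
    exact Nat.Coprime.pow_right m (by simpa [Nat.add_comm] using Nat.coprime_succ_self p)
  set u : (ZMod (p ^ m))ˣ := hu.unit with hu_def
  have huval : (u : ZMod (p ^ m)) = 1 + p := hu.unit_spec
  -- order of u
  have horder : orderOf u = p ^ (m - 1) := by
    apply Nat.dvd_antisymm
    · apply orderOf_dvd_of_pow_eq_one
      ext
      push_cast [huval]
      exact (aux_pow_eq_one_iff p hp hodd m hm _).mpr dvd_rfl
    · have h1 : u ^ orderOf u = 1 := pow_orderOf_eq_one u
      have : (1 + p : ZMod (p ^ m)) ^ orderOf u = 1 := by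
        have := congrArg (Units.val) h1
        push_cast [huval] at this
        exact this
      exact (aux_pow_eq_one_iff p hp hodd m hm _).mp this
  -- kernel of reduction map
  have : Fact p.Prime := ⟨hp⟩
  set f : (ZMod (p ^ m))ˣ →* (ZMod p)ˣ :=
    ZMod.unitsMap (dvd_pow_self p (by omega : m ≠ 0)) with hf_def
  have hfsurj : Function.Surjective f := ZMod.unitsMap_surjective _
  have hcard : Nat.card f.ker = p ^ (m - 1) := by
    have h1 : Nat.card (ZMod (p ^ m))ˣ = Nat.card ((ZMod (p ^ m))ˣ ⧸ f.ker) * Nat.card f.ker :=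
      Subgroup.card_eq_card_quotient_mul_card_subgroup f.ker
    have h2 : Nat.card ((ZMod (p ^ m))ˣ ⧸ f.ker) = Nat.card (ZMod p)ˣ :=
      Nat.card_congr (QuotientGroup.quotientKerEquivOfSurjective f hfsurj).toEquiv
    have h3 : Nat.card (ZMod (p ^ m))ˣ = p ^ (m - 1) * (p - 1) := by
      rw [Nat.card_eq_fintype_card, ZMod.card_units_eq_totient,
        Nat.totient_prime_pow hp (by omega)]
    have h4 : Nat.card (ZMod p)ˣ = p - 1 := by
      rw [Nat.card_eq_fintype_card, ZMod.card_units_eq_totient, Nat.totient_prime hp]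
    rw [h2, h4, h3] at h1
    have hp1 : 0 < p - 1 := by have := hp.one_lt; omega
    exact (Nat.eq_of_mul_eq_mul_left hp1 (by linarith [h1])).symm
  have hle : Subgroup.zpowers u ≤ f.ker := by
    rw [Subgroup.zpowers_le, MonoidHom.mem_ker]
    ext
    simp [hf_def, ZMod.unitsMap_def, huval, map_add, map_natCast, ZMod.natCast_self,
      -ZMod.castHom_apply]
  have heq : Subgroup.zpowers u = f.ker :=
    Subgroup.eq_of_le_of_card_ge hle (by rw [hcard, Nat.card_zpowers, horder])
  have hxmem : x ∈ Submonoid.powers u := by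
    rw [mem_powers_iff_mem_zpowers, heq, MonoidHom.mem_ker]
    ext
    simpa [hf_def, ZMod.unitsMap_def] using hx
  obtain ⟨n, hn⟩ := hxmem
  simp only [] at hn
  have hval : ∀ k : ℕ, ((u ^ k : (ZMod (p ^ m))ˣ) : ZMod (p ^ m)) = (1 + p : ZMod (p ^ m)) ^ k :=
    fun k => by rw [Units.val_pow_eq_pow_val, huval]
  refine ⟨n % p ^ (m - 1), ⟨Nat.mod_lt _ (pow_pos hp.pos _), ?_⟩, ?_⟩
  · have : u ^ (n % p ^ (m - 1)) = x := by
      rw [← horder, pow_mod_orderOf, hn]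
    rw [← hval, this]
  · rintro y ⟨hy1, hy2⟩
    have huy : u ^ y = u ^ (n % p ^ (m - 1)) := by
      apply Units.ext
      rw [hval, hval, hy2, ← hval, ← horder, pow_mod_orderOf, hn]
    have := pow_eq_pow_iff_modEq.mp huy
    rw [horder, Nat.ModEq, Nat.mod_eq_of_lt hy1,
      Nat.mod_eq_of_lt (Nat.mod_lt _ (pow_pos hp.pos _))] at this
    exact this
end

section
/- Let p be an odd prime and x an integer. In the field ℚ_p of p-adic numbers, let L denote the sum of the convergent series Σ_{i=1}^∞ (-1)^{i+1} (p·x)^i / i. Then the series Σ_{j=0}^∞ L^j / j! converges in ℚ_p and its sum equals 1 + p·x. -/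
open PowerSeries

namespace Stmt7Aux

noncomputable def G : PowerSeries ℚ := X * PowerSeries.mk (fun k => (-1 : ℚ)^k / (k+1))

lemma coeff_G_zero : (coeff (R := ℚ) 0) G = 0 := by
  simp [G, coeff_zero_eq_constantCoeff]

lemma coeff_G_succ (k : ℕ) : coeff (R := ℚ) (k+1) G = (-1 : ℚ)^k/(k+1) := by
  simp [G, coeff_succ_X_mul]

lemma derivative_G : d⁄dX ℚ G = PowerSeries.mk fun n => (-1 : ℚ)^n := by
  ext n
  rw [coeff_derivative, coeff_G_succ, coeff_mk, div_mul_cancel₀]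
  exact Nat.cast_add_one_ne_zero n

lemma one_add_X_mul_derivative_G : (1 + X) * d⁄dX ℚ G = 1 := by
  ext n
  rw [add_mul, one_mul, map_add, derivative_G, coeff_one]
  cases n with
  | zero => simp [coeff_zero_eq_constantCoeff]
  | succ n => simp [coeff_succ_X_mul, coeff_mk, pow_succ]

lemma coeff_G_pow_eq_zero {n j : ℕ} (h : n < j) : coeff (R := ℚ) n (G ^ j) = 0 := by
  have hd : (X : PowerSeries ℚ)^j ∣ G^j := pow_dvd_pow_of_dvd (dvd_mul_right _ _) j
  exact (X_pow_dvd_iff.mp hd) n h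

/-- the key coefficient recurrence -/
lemma recurrence (j n : ℕ) :
    (n+1 : ℚ) * coeff (R := ℚ) (n+1) (G ^ (j+1)) + n * coeff (R := ℚ) n (G ^ (j+1))
      = (j+1) * coeff (R := ℚ) n (G ^ j) := by
  have hD : d⁄dX ℚ (G ^ (j+1)) = (j+1 : ℕ) • (G ^ j * d⁄dX ℚ G) := by
    have := Derivation.leibniz_pow (d⁄dX ℚ) (a := G) (j+1)
    simpa [smul_eq_mul] using this
  have hmul : (1 + X) * d⁄dX ℚ (G ^ (j+1)) = (j+1 : ℕ) • G ^ j := by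
    rw [hD, mul_smul_comm]
    have : (1 + X) * (G ^ j * d⁄dX ℚ G) = G ^ j * ((1 + X) * d⁄dX ℚ G) := by ring
    rw [this, one_add_X_mul_derivative_G, mul_one]
  have hc := congrArg (coeff (R := ℚ) n) hmul
  rw [add_mul, one_mul, map_add, map_nsmul] at hc
  rw [coeff_derivative] at hc
  cases n with
  | zero =>
    have h0 : coeff (R := ℚ) 0 (X * d⁄dX ℚ (G ^ (j+1))) = 0 := by
      simp [coeff_zero_eq_constantCoeff]
    rw [h0, nsmul_eq_mul] at hc
    push_cast at hc ⊢
    linarith [hc]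
  | succ m =>
    rw [coeff_succ_X_mul, coeff_derivative, nsmul_eq_mul] at hc
    push_cast at hc ⊢
    linarith [hc]

noncomputable def c (n : ℕ) : ℚ := ∑ j ∈ Finset.range (n+1), (j.factorial : ℚ)⁻¹ * coeff (R := ℚ) n (G ^ j)

lemma c_zero : c 0 = 1 := by simp [c]

lemma c_rec (n : ℕ) : (n+1 : ℚ) * c (n+1) = (1 - n) * c n := by
  have hfac : ∀ k : ℕ, ((k+1).factorial : ℚ)⁻¹ * ((k : ℚ)+1) = (k.factorial : ℚ)⁻¹ := by
    intro k
    rw [Nat.factorial_succ]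
    push_cast
    rw [mul_inv]
    have h1 : ((k : ℚ) + 1) ≠ 0 := by positivity
    field_simp
  have hS2 : ∑ k ∈ Finset.range (n+1), ((k+1).factorial : ℚ)⁻¹ * coeff (R := ℚ) n (G ^ (k+1))
      = c n - (if n = 0 then 1 else 0) := by
    have h0 := Finset.sum_range_succ' (fun j => (j.factorial : ℚ)⁻¹ * coeff (R := ℚ) n (G ^ j)) (n+1)
    have h2 : ∑ j ∈ Finset.range (n+2), (j.factorial : ℚ)⁻¹ * coeff (R := ℚ) n (G ^ j) = c n := by
      rw [Finset.sum_range_succ, c, coeff_G_pow_eq_zero (Nat.lt_succ_self n), mul_zero, add_zero]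
    rw [h2] at h0
    simp only [pow_zero, coeff_one, Nat.factorial_zero, Nat.cast_one, inv_one, one_mul] at h0
    linarith [h0]
  have h1 : (n+1:ℚ) * c (n+1)
      = ∑ j ∈ Finset.range (n+2), (j.factorial : ℚ)⁻¹ * (((n:ℚ)+1) * coeff (R := ℚ) (n+1) (G ^ j)) := by
    rw [c, Finset.mul_sum]
    apply Finset.sum_congr rfl; intro j _; ring
  rw [Finset.sum_range_succ'] at h1
  have hz : (Nat.factorial 0 : ℚ)⁻¹ * (((n:ℚ)+1) * coeff (R := ℚ) (n+1) ((G : PowerSeries ℚ) ^ 0)) = 0 := by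
    simp [coeff_one]
  rw [hz, add_zero] at h1
  have h3 : ∀ k ∈ Finset.range (n+1),
      ((k+1).factorial : ℚ)⁻¹ * (((n:ℚ)+1) * coeff (R := ℚ) (n+1) (G ^ (k+1)))
        = (k.factorial : ℚ)⁻¹ * coeff (R := ℚ) n (G ^ k)
          - (n:ℚ) * (((k+1).factorial : ℚ)⁻¹ * coeff (R := ℚ) n (G ^ (k+1))) := by
    intro k _
    have hr := recurrence k n
    have hx : ((n:ℚ)+1) * coeff (R := ℚ) (n+1) (G ^ (k+1))
        = ((k:ℚ)+1) * coeff (R := ℚ) n (G ^ k) - (n:ℚ) * coeff (R := ℚ) n (G ^ (k+1)) := by linarith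
    rw [hx, mul_sub, ← mul_assoc, hfac k]
    ring
  rw [Finset.sum_congr rfl h3, Finset.sum_sub_distrib] at h1
  simp only [← Finset.mul_sum] at h1
  rw [hS2] at h1
  have hcn : ∑ k ∈ Finset.range (n+1), (k.factorial : ℚ)⁻¹ * coeff (R := ℚ) n (G ^ k) = c n := rfl
  rw [hcn] at h1
  rcases Nat.eq_zero_or_pos n with h | h
  · subst h; simp at h1 ⊢; linarith
  · rw [if_neg (Nat.pos_iff_ne_zero.mp h)] at h1
    rw [h1]; ring

lemma c_one : c 1 = 1 := by
  have := c_rec 0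
  rw [c_zero] at this
  push_cast at this
  linarith

lemma c_eq_zero (n : ℕ) : c (n+2) = 0 := by
  induction n with
  | zero =>
    have := c_rec 1
    rw [c_one] at this
    norm_num at this
    exact this
  | succ m ih =>
    have h := c_rec (m+2)
    rw [ih, mul_zero] at h
    have h2 : ((m+2 : ℕ) : ℚ) + 1 ≠ 0 := by positivity
    have h3 : c (m+2+1) = 0 := by
      rcases mul_eq_zero.mp h with h' | h'
      · exact absurd h' h2
      · exact h'
    simpa [show m+1+2 = m+2+1 from rfl] using h3


/-! ### Analytic part -/

section Analytic

variable {p : ℕ} [Fact p.Prime]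

lemma norm_inv_natCast_le (n : ℕ) (hn : n ≠ 0) : ‖((n : ℚ_[p]))⁻¹‖ ≤ (n : ℝ) := by
  have hn0 : (n : ℚ_[p]) ≠ 0 := Nat.cast_ne_zero.2 hn
  rw [norm_inv, Padic.norm_eq_zpow_neg_valuation hn0, Padic.valuation_natCast, ← zpow_neg, neg_neg,
    zpow_natCast]
  have h1 : p ^ padicValNat p n ≤ n := by
    have := Nat.ordProj_le p hn
    rwa [Nat.factorization_def n (Fact.out : p.Prime)] at this
  exact_mod_cast Nat.cast_le.mpr h1

lemma norm_inv_factorial_eq (j : ℕ) :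
    ‖((j.factorial : ℚ_[p]))⁻¹‖ = (p : ℝ) ^ (padicValNat p j.factorial) := by
  have hn0 : ((j.factorial : ℕ) : ℚ_[p]) ≠ 0 := Nat.cast_ne_zero.2 j.factorial_ne_zero
  rw [norm_inv, Padic.norm_eq_zpow_neg_valuation hn0, Padic.valuation_natCast, ← zpow_neg, neg_neg,
    zpow_natCast]

lemma two_mul_padicValNat_factorial_le (hp3 : 3 ≤ p) {j : ℕ} (hj : j ≠ 0) :
    2 * padicValNat p j.factorial ≤ j - 1 := by
  have hleg := sub_one_mul_padicValNat_factorial (p := p) j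
  have hdig : 1 ≤ (p.digits j).sum := by
    have hne : p.digits j ≠ [] := Nat.digits_ne_nil_iff_ne_zero.mpr hj
    have hlast := Nat.getLast_digit_ne_zero p hj
    have hmem := List.getLast_mem hne
    have := List.single_le_sum (fun x (_ : x ∈ p.digits j) => Nat.zero_le x) _ hmem
    omega
  have h2 : 2 * padicValNat p j.factorial ≤ (p - 1) * padicValNat p j.factorial := by
    apply Nat.mul_le_mul_right
    omega
  omega

lemma norm_inv_factorial_mul_le (hp3 : 3 ≤ p) (j : ℕ) :
    ‖((j.factorial : ℚ_[p]))⁻¹‖ * (3 / (2 * (p : ℝ))) ^ j ≤ (Real.sqrt 3 / 2) ^ j := by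
  have hp0 : (0 : ℝ) < p := by positivity
  have hp3' : (3 : ℝ) ≤ p := by exact_mod_cast hp3
  rcases Nat.eq_zero_or_pos j with rfl | hj
  · simp [norm_inv_factorial_eq]
  set v := padicValNat p j.factorial with hv
  have h2v : 2 * v ≤ j - 1 := two_mul_padicValNat_factorial_le hp3 (Nat.pos_iff_ne_zero.mp hj)
  obtain ⟨k, rfl⟩ : ∃ k, j = k + 1 := ⟨j - 1, by omega⟩
  rw [norm_inv_factorial_eq, ← hv]
  have hL0 : (0 : ℝ) ≤ (p : ℝ) ^ v * (3 / (2 * (p : ℝ))) ^ (k + 1) := by positivity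
  have hR0 : (0 : ℝ) ≤ (Real.sqrt 3 / 2) ^ (k + 1) := by positivity
  rw [← pow_le_pow_iff_left₀ hL0 hR0 (two_ne_zero)]
  have e1 : ((p : ℝ) ^ v * (3 / (2 * (p : ℝ))) ^ (k + 1)) ^ 2
      = (p : ℝ) ^ (2 * v) * (9 / (4 * (p : ℝ) ^ 2)) ^ (k + 1) := by
    rw [mul_pow, ← pow_mul, mul_comm v 2]
    congr 1
    rw [← pow_mul, mul_comm (k+1) 2, pow_mul]
    congr 1
    rw [div_pow]
    congr 1
    · norm_num
    · ring
  have e2 : (((Real.sqrt 3) / 2) ^ (k + 1)) ^ 2 = ((3 : ℝ) / 4) ^ (k + 1) := by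
    rw [← pow_mul, mul_comm (k+1) 2, pow_mul, div_pow, Real.sq_sqrt (by norm_num)]
    norm_num
  rw [e1, e2]
  have h3 : (p : ℝ) ^ (2 * v) ≤ (p : ℝ) ^ k := by
    apply pow_le_pow_right₀ (by linarith)
    omega
  calc (p : ℝ) ^ (2 * v) * (9 / (4 * (p : ℝ) ^ 2)) ^ (k + 1)
      ≤ (p : ℝ) ^ k * (9 / (4 * (p : ℝ) ^ 2)) ^ (k + 1) := by
        have : (0:ℝ) ≤ (9 / (4 * (p : ℝ) ^ 2)) ^ (k + 1) := by positivity
        exact mul_le_mul_of_nonneg_right h3 this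
    _ = (9 / (4 * (p : ℝ) ^ 2)) * (9 / (4 * (p : ℝ))) ^ k := by
        rw [pow_succ', ← mul_assoc, mul_comm ((p:ℝ)^k), mul_assoc, ← mul_pow]
        congr 2
        field_simp
    _ ≤ (3 / 4) * ((3:ℝ) / 4) ^ k := by
        have h4 : (9 : ℝ) / (4 * (p : ℝ) ^ 2) ≤ 3 / 4 := by
          rw [div_le_div_iff₀ (by positivity) (by norm_num)]
          nlinarith
        have h5 : (9 : ℝ) / (4 * (p : ℝ)) ≤ 3 / 4 := by
          rw [div_le_div_iff₀ (by positivity) (by norm_num)]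
          nlinarith
        apply mul_le_mul h4 (pow_le_pow_left₀ (by positivity) h5 k) (by positivity) (by norm_num)
    _ = ((3 : ℝ) / 4) ^ (k + 1) := by ring

lemma real_A3 {P : ℝ} (hP : 3 ≤ P) (k : ℕ) :
    ((k : ℝ) + 1) * (P⁻¹) ^ (k + 1) ≤ 3 / (2 * P) * (2 / 3) ^ (k + 1) := by
  have hP0 : (0 : ℝ) < P := by linarith
  have h1 : ((k : ℝ) + 1) ≤ 2 ^ k := by
    have : k + 1 ≤ 2 ^ k := Nat.lt_two_pow_self (n := k)
    exact_mod_cast this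
  calc ((k : ℝ) + 1) * (P⁻¹) ^ (k + 1) ≤ 2 ^ k * (P⁻¹) ^ (k + 1) := by
        apply mul_le_mul_of_nonneg_right h1 (by positivity)
    _ = 2 ^ k * (P⁻¹) ^ k * P⁻¹ := by ring
    _ ≤ 2 ^ k * ((3 : ℝ)⁻¹) ^ k * P⁻¹ := by
        have h0 : P⁻¹ ≤ (3 : ℝ)⁻¹ := by
          rw [inv_le_inv₀ hP0 (by norm_num)]
          exact hP
        gcongr
    _ = 3 / (2 * P) * (2 / 3) ^ (k + 1) := by
        rw [← mul_pow]
        field_simp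
        ring

section WithT

variable {p : ℕ} [Fact p.Prime] (hp3 : 3 ≤ p) {t : ℚ_[p]} (ht : ‖t‖ ≤ (p : ℝ)⁻¹)
include hp3 ht

lemma norm_coeffG_le (a : ℕ) :
    ‖((coeff (R := ℚ) a G : ℚ) : ℚ_[p]) * t ^ a‖ ≤ 3 / (2 * (p : ℝ)) * (2 / 3) ^ a := by
  have hp0 : (0 : ℝ) < p := by positivity
  cases a with
  | zero => rw [coeff_G_zero]; simp; positivity
  | succ k =>
    rw [coeff_G_succ]
    have hcast : (((-1 : ℚ) ^ k / ((k : ℚ) + 1) : ℚ) : ℚ_[p])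
        = (-1 : ℚ_[p]) ^ k * (((k : ℚ_[p]) + 1))⁻¹ := by
      push_cast
      rw [div_eq_mul_inv]
    rw [hcast, norm_mul, norm_mul, norm_pow, norm_neg, norm_one, one_pow, one_mul]
    have h1 : ‖(((k : ℚ_[p]) + 1))⁻¹‖ ≤ ((k : ℝ) + 1) := by
      have := norm_inv_natCast_le (p := p) (k + 1) (by omega)
      push_cast at this
      exact this
    have h2 : ‖t ^ (k + 1)‖ ≤ ((p : ℝ)⁻¹) ^ (k + 1) := by
      rw [norm_pow]
      exact pow_le_pow_left₀ (norm_nonneg t) ht _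
    calc ‖(((k : ℚ_[p]) + 1))⁻¹‖ * ‖t ^ (k + 1)‖
        ≤ ((k : ℝ) + 1) * ((p : ℝ)⁻¹) ^ (k + 1) := by
          apply mul_le_mul h1 h2 (norm_nonneg _) (by positivity)
      _ ≤ 3 / (2 * (p : ℝ)) * (2 / 3) ^ (k + 1) := real_A3 (by exact_mod_cast hp3) k

lemma norm_coeff_pow_le (j n : ℕ) :
    ‖((coeff (R := ℚ) n (G ^ j) : ℚ) : ℚ_[p]) * t ^ n‖ ≤ (3 / (2 * (p : ℝ))) ^ j * (2 / 3) ^ n := by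
  have hp0 : (0 : ℝ) < p := by positivity
  induction j generalizing n with
  | zero =>
    cases n with
    | zero => simp
    | succ m =>
      rw [pow_zero, coeff_one, if_neg (Nat.succ_ne_zero m)]
      simp only [Rat.cast_zero, zero_mul, norm_zero]
      positivity
  | succ j ih =>
    have hexp : ((coeff (R := ℚ) n (G ^ (j + 1)) : ℚ) : ℚ_[p]) * t ^ n
        = ∑ kl ∈ Finset.HasAntidiagonal.antidiagonal n,
            (((coeff (R := ℚ) kl.1 G : ℚ) : ℚ_[p]) * t ^ kl.1)
              * (((coeff (R := ℚ) kl.2 (G ^ j) : ℚ) : ℚ_[p]) * t ^ kl.2) := by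
      rw [pow_succ', coeff_mul, Rat.cast_sum, Finset.sum_mul]
      apply Finset.sum_congr rfl
      intro kl hkl
      have hkl' : kl.1 + kl.2 = n := Finset.HasAntidiagonal.mem_antidiagonal.mp hkl
      rw [Rat.cast_mul, ← hkl', pow_add]
      ring
    rw [hexp]
    apply IsUltrametricDist.norm_sum_le_of_forall_le_of_nonneg (by positivity)
    intro kl hkl
    have hkl' : kl.1 + kl.2 = n := Finset.HasAntidiagonal.mem_antidiagonal.mp hkl
    rw [norm_mul]
    calc ‖((coeff (R := ℚ) kl.1 G : ℚ) : ℚ_[p]) * t ^ kl.1‖ * ‖((coeff (R := ℚ) kl.2 (G ^ j) : ℚ) : ℚ_[p]) * t ^ kl.2‖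
        ≤ (3 / (2 * (p : ℝ)) * (2 / 3) ^ kl.1) * ((3 / (2 * (p : ℝ))) ^ j * (2 / 3) ^ kl.2) := by
          apply mul_le_mul (norm_coeffG_le hp3 ht kl.1) (ih kl.2) (norm_nonneg _) (by positivity)
      _ = (3 / (2 * (p : ℝ))) ^ (j + 1) * (2 / 3) ^ n := by
          rw [← hkl', pow_add]
          ring

end WithT

end Analytic

end Stmt7Aux

open Stmt7Aux PowerSeries in
theorem stmt_7 (p : ℕ) [Fact p.Prime] (hodd : Odd p) (x : ℤ) :
    Summable (fun j : ℕ =>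
      (∑' i : ℕ, (-1 : ℚ_[p]) ^ i * ((p : ℚ_[p]) * (x : ℚ_[p])) ^ (i + 1) / ((i : ℚ_[p]) + 1)) ^ j
        / (j.factorial : ℚ_[p])) ∧
    (∑' j : ℕ,
      (∑' i : ℕ, (-1 : ℚ_[p]) ^ i * ((p : ℚ_[p]) * (x : ℚ_[p])) ^ (i + 1) / ((i : ℚ_[p]) + 1)) ^ j
        / (j.factorial : ℚ_[p]))
      = 1 + (p : ℚ_[p]) * (x : ℚ_[p]) := by
  have hp2 : 2 ≤ p := (Fact.out : p.Prime).two_le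
  have hp3 : 3 ≤ p := by
    rcases hodd with ⟨m, hm⟩
    omega
  have hp0 : (0 : ℝ) < p := by positivity
  set t : ℚ_[p] := (p : ℚ_[p]) * (x : ℚ_[p]) with hts
  have ht : ‖t‖ ≤ (p : ℝ)⁻¹ := by
    rw [hts, norm_mul, Padic.norm_p]
    calc (p : ℝ)⁻¹ * ‖((x : ℤ) : ℚ_[p])‖ ≤ (p : ℝ)⁻¹ * 1 := by
          exact mul_le_mul_of_nonneg_left (Padic.norm_int_le_one x) (by positivity)
      _ = (p : ℝ)⁻¹ := mul_one _
  have hgeo23 : Summable (fun n : ℕ => ((2 : ℝ) / 3) ^ n) :=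
    summable_geometric_of_lt_one (by norm_num) (by norm_num)
  have hsq : Real.sqrt 3 / 2 < 1 := by
    rw [div_lt_one (by norm_num)]
    have : Real.sqrt 3 < 2 := by
      rw [show (2 : ℝ) = Real.sqrt 4 by
        rw [show (4 : ℝ) = 2 ^ 2 by norm_num, Real.sqrt_sq (by norm_num)]]
      exact Real.sqrt_lt_sqrt (by norm_num) (by norm_num)
    exact this
  have hgeosq : Summable (fun j : ℕ => (Real.sqrt 3 / 2) ^ j) :=
    summable_geometric_of_lt_one (by positivity) hsq
  set g : ℕ → ℚ_[p] := fun n => ((coeff (R := ℚ) n G : ℚ) : ℚ_[p]) * t ^ n with hgdef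
  have hgnorm : Summable (fun n => ‖g n‖) :=
    Summable.of_nonneg_of_le (fun n => norm_nonneg _) (fun n => norm_coeffG_le hp3 ht n)
      (hgeo23.mul_left _)
  have hgsum : Summable g := hgnorm.of_norm
  set L : ℚ_[p] := ∑' i : ℕ, (-1 : ℚ_[p]) ^ i * t ^ (i + 1) / ((i : ℚ_[p]) + 1) with hLdef
  have hfun : (fun i : ℕ => (-1 : ℚ_[p]) ^ i * t ^ (i + 1) / ((i : ℚ_[p]) + 1))
      = fun i => g (i + 1) := by
    funext i
    rw [hgdef]
    simp only [coeff_G_succ]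
    push_cast
    ring
  have hgshift : HasSum (fun i => g (i + 1)) L := by
    rw [hLdef, hfun]
    exact ((summable_nat_add_iff 1).mpr hgsum).hasSum
  have hg0 : g 0 = 0 := by rw [hgdef]; simp [coeff_G_zero]
  have hgL : HasSum g L := by
    have h := (hasSum_nat_add_iff (f := g) 1).mp hgshift
    simpa [hg0] using h
  have hjnorm : ∀ j : ℕ, Summable (fun n => ‖((coeff (R := ℚ) n (G ^ j) : ℚ) : ℚ_[p]) * t ^ n‖) :=
    fun j => Summable.of_nonneg_of_le (fun n => norm_nonneg _)
      (fun n => norm_coeff_pow_le hp3 ht j n) (hgeo23.mul_left _)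
  have hpow : ∀ j : ℕ, HasSum (fun n => ((coeff (R := ℚ) n (G ^ j) : ℚ) : ℚ_[p]) * t ^ n) (L ^ j) := by
    intro j
    induction j with
    | zero =>
      have h0 : HasSum (fun n : ℕ => ((coeff (R := ℚ) n ((G : PowerSeries ℚ) ^ 0) : ℚ) : ℚ_[p]) * t ^ n)
          (((coeff (R := ℚ) 0 ((G : PowerSeries ℚ) ^ 0) : ℚ) : ℚ_[p]) * t ^ 0) := by
        apply hasSum_single 0
        intro b hb
        rw [pow_zero, coeff_one, if_neg hb]
        simp
      simpa using h0
    | succ j ih =>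
      have hnormj := hjnorm j
      have key := tsum_mul_tsum_eq_tsum_sum_antidiagonal_of_summable_norm hgnorm hnormj
      have hsumS : Summable (fun n => ∑ kl ∈ Finset.HasAntidiagonal.antidiagonal n,
          g kl.1 * (((coeff (R := ℚ) kl.2 (G ^ j) : ℚ) : ℚ_[p]) * t ^ kl.2)) :=
        (summable_norm_sum_mul_antidiagonal_of_summable_norm hgnorm hnormj).of_norm
      have heq : (fun n => ∑ kl ∈ Finset.HasAntidiagonal.antidiagonal n,
            g kl.1 * (((coeff (R := ℚ) kl.2 (G ^ j) : ℚ) : ℚ_[p]) * t ^ kl.2))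
          = fun n => ((coeff (R := ℚ) n (G ^ (j + 1)) : ℚ) : ℚ_[p]) * t ^ n := by
        funext n
        rw [pow_succ', coeff_mul, Rat.cast_sum, Finset.sum_mul]
        apply Finset.sum_congr rfl
        intro kl hkl
        have hkl' := Finset.HasAntidiagonal.mem_antidiagonal.mp hkl
        rw [hgdef, Rat.cast_mul, ← hkl', pow_add]
        ring
      have hfin : HasSum (fun n => ((coeff (R := ℚ) n (G ^ (j + 1)) : ℚ) : ℚ_[p]) * t ^ n) (L * L ^ j) := by
        rw [← heq]
        have h2 := hsumS.hasSum
        rwa [← key, hgL.tsum_eq, ih.tsum_eq] at h2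
      have hps : L ^ (j + 1) = L * L ^ j := pow_succ' L j
      rw [hps]
      exact hfin
  set Φ : ℕ × ℕ → ℚ_[p] := fun q =>
    ((q.1.factorial : ℚ_[p]))⁻¹ * (((coeff (R := ℚ) q.2 (G ^ q.1) : ℚ) : ℚ_[p]) * t ^ q.2) with hPhidef
  have hΦnormbound : ∀ q : ℕ × ℕ, ‖Φ q‖ ≤ (Real.sqrt 3 / 2) ^ q.1 * (2 / 3) ^ q.2 := by
    rintro ⟨j, n⟩
    rw [hPhidef]
    dsimp only
    rw [norm_mul]
    calc ‖((j.factorial : ℚ_[p]))⁻¹‖ * ‖((coeff (R := ℚ) n (G ^ j) : ℚ) : ℚ_[p]) * t ^ n‖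
        ≤ ‖((j.factorial : ℚ_[p]))⁻¹‖ * ((3 / (2 * (p : ℝ))) ^ j * (2 / 3) ^ n) :=
          mul_le_mul_of_nonneg_left (norm_coeff_pow_le hp3 ht j n) (norm_nonneg _)
      _ = (‖((j.factorial : ℚ_[p]))⁻¹‖ * (3 / (2 * (p : ℝ))) ^ j) * (2 / 3) ^ n := by ring
      _ ≤ (Real.sqrt 3 / 2) ^ j * (2 / 3) ^ n :=
          mul_le_mul_of_nonneg_right (norm_inv_factorial_mul_le hp3 j) (by positivity)
  have hΦsum : Summable Φ :=
    Summable.of_norm (Summable.of_nonneg_of_le (fun _ => norm_nonneg _) hΦnormbound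
      (Summable.mul_of_nonneg hgeosq hgeo23 (fun _ => by positivity) (fun _ => by positivity)))
  have hrow : ∀ j : ℕ, HasSum (fun n => Φ (j, n)) (L ^ j / (j.factorial : ℚ_[p])) := by
    intro j
    have h := (hpow j).mul_left ((j.factorial : ℚ_[p]))⁻¹
    rw [div_eq_mul_inv, mul_comm]
    exact h
  have hmain : HasSum (fun j => L ^ j / (j.factorial : ℚ_[p])) (∑' q, Φ q) :=
    HasSum.prod_fiberwise hΦsum.hasSum hrow
  have hcol : ∀ n : ℕ, HasSum (fun j => Φ (j, n)) (((c n : ℚ) : ℚ_[p]) * t ^ n) := by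
    intro n
    have hz : ∀ j ∉ Finset.range (n + 1), Φ (j, n) = 0 := by
      intro j hj
      have hn : n < j := by
        simp only [Finset.mem_range] at hj
        omega
      rw [hPhidef]
      dsimp only
      rw [coeff_G_pow_eq_zero hn]
      simp
    have h := hasSum_sum_of_ne_finset_zero (L := SummationFilter.unconditional ℕ) (f := fun j => Φ (j, n)) hz
    have h2 : ∑ j ∈ Finset.range (n + 1), Φ (j, n) = ((c n : ℚ) : ℚ_[p]) * t ^ n := by
      rw [c, Rat.cast_sum, Finset.sum_mul]
      apply Finset.sum_congr rfl
      intro j _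
      rw [hPhidef]
      dsimp only
      push_cast
      ring
    rwa [h2] at h
  have hswap : HasSum (fun q : ℕ × ℕ => Φ (q.2, q.1)) (∑' q, Φ q) := by
    have := ((Equiv.prodComm ℕ ℕ).hasSum_iff (f := Φ) (a := ∑' q, Φ q)).mpr hΦsum.hasSum
    exact this
  have hC : HasSum (fun n => ((c n : ℚ) : ℚ_[p]) * t ^ n) (∑' q, Φ q) :=
    HasSum.prod_fiberwise hswap (fun n => hcol n)
  have hC' : HasSum (fun n => ((c n : ℚ) : ℚ_[p]) * t ^ n) (1 + t) := by
    have hz : ∀ n ∉ Finset.range 2, ((c n : ℚ) : ℚ_[p]) * t ^ n = 0 := by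
      intro n hn
      simp only [Finset.mem_range] at hn
      obtain ⟨m, rfl⟩ : ∃ m, n = m + 2 := ⟨n - 2, by omega⟩
      rw [c_eq_zero]
      simp
    have h := hasSum_sum_of_ne_finset_zero (L := SummationFilter.unconditional ℕ) (f := fun n => ((c n : ℚ) : ℚ_[p]) * t ^ n) hz
    have h2 : ∑ n ∈ Finset.range 2, ((c n : ℚ) : ℚ_[p]) * t ^ n = 1 + t := by
      rw [Finset.sum_range_succ, Finset.sum_range_one, c_zero, c_one]
      push_cast
      ring
    rwa [h2] at h
  have hS : (∑' q, Φ q) = 1 + t := hC.unique hC'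
  exact ⟨hmain.summable, by rw [hmain.tsum_eq, hS]⟩
end

section
/- Let p be a prime, m ≥ 1 a natural number, and f, g polynomials with integer coefficients. If p^{2m} divides f(x) - g(x) for every integer x, then p^m divides f'(x) - g'(x) for every integer x, where f' and g' are the formal derivatives. -/
theorem stmt_11 (p : ℕ) (hp : p.Prime) (m : ℕ) (hm : 1 ≤ m)
    (f g : Polynomial ℤ)
    (h : ∀ x : ℤ, (p : ℤ) ^ (2 * m) ∣ f.eval x - g.eval x) :
    ∀ x : ℤ, (p : ℤ) ^ m ∣ f.derivative.eval x - g.derivative.eval x := by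
  intro x
  set t : ℤ := (p : ℤ) ^ m with ht
  obtain ⟨k, hk⟩ := f.binomExpansion x t
  obtain ⟨l, hl⟩ := g.binomExpansion x t
  have hp0 : t ≠ 0 := pow_ne_zero _ (by exact_mod_cast hp.ne_zero)
  have h2 : (p : ℤ) ^ (2 * m) = t ^ 2 := by rw [ht, ← pow_mul, mul_comm]
  have h1 := h x
  have h3 := h (x + t)
  rw [hk, hl, h2] at h3
  rw [h2] at h1
  -- f.eval x + f' x * t + k t^2 - (g.eval x + g' x * t + l t^2)
  have key : t ^ 2 ∣ (f.derivative.eval x - g.derivative.eval x) * t := by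
    have := dvd_sub h3 h1
    have e : f.eval x + Polynomial.eval x (Polynomial.derivative f) * t + k * t ^ 2 -
        (g.eval x + Polynomial.eval x (Polynomial.derivative g) * t + l * t ^ 2) -
        (f.eval x - g.eval x) =
        (f.derivative.eval x - g.derivative.eval x) * t + (k - l) * t ^ 2 := by ring
    rw [e] at this
    have h4 : t ^ 2 ∣ (k - l) * t ^ 2 := Dvd.intro_left _ rfl
    simpa using this.sub h4
  rw [pow_two] at key
  exact (mul_dvd_mul_iff_right hp0).mp key
end

section
/- Let p be an odd prime, m ≥ 1 a natural number, and x an integer. Then there exists an integer y with y^p ≡ 1 + p^2·x (mod p^{m+1}), and this y is unique modulo p^m: any two integers y₁, y₂ satisfying y^p ≡ 1 + p^2·x (mod p^{m+1}) satisfy y₁ ≡ y₂ (mod p^m). -/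
lemma aux_key (p : ℕ) (hp : p.Prime) (hodd : Odd p) (n : ℕ) (hn : 1 ≤ n) (a b : ℤ)
    (h : (p : ℤ) ^ n ∣ b) :
    (p : ℤ) ^ (n + 2) ∣ (a + b) ^ p - a ^ p - p * a ^ (p - 1) * b := by
  have hp3 : 3 ≤ p := by
    have h2 := hp.two_le; have := Nat.odd_iff.mp hodd; omega
  obtain ⟨q, rfl⟩ : ∃ q, p = q + 2 := ⟨p - 2, by omega⟩
  obtain ⟨c, rfl⟩ := h
  rw [add_pow, Finset.sum_range_succ, Finset.sum_range_succ]
  simp only [Nat.add_sub_cancel, Nat.choose_succ_self_right, Nat.choose_self,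
    Nat.succ_sub_succ]
  have e2 : q + 1 - q = 1 := by omega
  have e3 : q - q = 0 := by omega
  have e4 : q + 1 - 0 = q + 1 := by omega
  rw [e2, e3, e4]
  have hrw : ∀ S : ℤ, S + a ^ (q + 1) * ((((q:ℤ) + 2)) ^ n * c) ^ 1 * ((q : ℤ) + 1 + 1) +
      a ^ (q + 2) * (((q:ℤ) + 2) ^ n * c) ^ 0 * (1 : ℤ) -
      a ^ (q + 2) - ((q:ℤ) + 2) * a ^ (q + 1) * (((q:ℤ) + 2) ^ n * c) = S := by
    intro S; ring
  push_cast
  rw [hrw]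
  apply Finset.dvd_sum
  intro k hk
  have hk' : k < q + 1 := Finset.mem_range.mp hk
  rcases Nat.eq_zero_or_pos k with rfl | hkpos
  · -- term b^(q+2), divisible by p^(n(q+2))
    have h1 : n + 2 ≤ n * (q + 2) := by nlinarith
    calc ((q:ℤ) + 2) ^ (n + 2) ∣ ((q:ℤ) + 2) ^ (n * (q + 2)) := pow_dvd_pow _ h1
      _ = (((q:ℤ) + 2) ^ n) ^ (q + 2) := by rw [pow_mul]
      _ ∣ (((q:ℤ) + 2) ^ n * c) ^ (q + 2) := pow_dvd_pow_of_dvd ⟨c, rfl⟩ _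
      _ ∣ a ^ 0 * (((q:ℤ) + 2) ^ n * c) ^ (q + 2 - 0) * ((q + 2).choose 0 : ℤ) := by
        simp
  · have hC : ((q : ℤ) + 2) ∣ ((q + 2).choose k : ℤ) := by
      have := hp.dvd_choose_self (k := k) (by omega) (by omega)
      exact_mod_cast Int.natCast_dvd_natCast.mpr this
    have h1 : n + 1 ≤ n * (q + 2 - k) := by
      have : 2 ≤ q + 2 - k := by omega
      nlinarith
    have h2 : (((q:ℤ) + 2)) ^ (n + 1) ∣ (((q:ℤ) + 2) ^ n * c) ^ (q + 2 - k) := by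
      calc ((q:ℤ) + 2) ^ (n + 1) ∣ ((q:ℤ) + 2) ^ (n * (q + 2 - k)) := pow_dvd_pow _ h1
        _ = (((q:ℤ) + 2) ^ n) ^ (q + 2 - k) := by rw [pow_mul]
        _ ∣ (((q:ℤ) + 2) ^ n * c) ^ (q + 2 - k) := pow_dvd_pow_of_dvd ⟨c, rfl⟩ _
    have : (((q:ℤ) + 2)) ^ (n + 2) ∣ (((q:ℤ) + 2) ^ n * c) ^ (q + 2 - k) * ((q + 2).choose k : ℤ) := by
      rw [pow_succ]
      exact mul_dvd_mul h2 hC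
    calc (((q:ℤ) + 2)) ^ (n + 2) ∣ (((q:ℤ) + 2) ^ n * c) ^ (q + 2 - k) * ((q + 2).choose k : ℤ) := this
      _ ∣ a ^ k * (((q:ℤ) + 2) ^ n * c) ^ (q + 2 - k) * ((q + 2).choose k : ℤ) :=
        ⟨a ^ k, by ring⟩

lemma aux_ex (p : ℕ) (hp : p.Prime) (hodd : Odd p) (x : ℤ) :
    ∀ m : ℕ, 1 ≤ m → ∃ y : ℤ, (p : ℤ) ∣ y - 1 ∧ (p : ℤ) ^ (m + 1) ∣ y ^ p - (1 + p ^ 2 * x) := by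
  intro m
  induction m with
  | zero => omega
  | succ m ih =>
    intro _
    rcases Nat.eq_zero_or_pos m with rfl | hm
    · -- base case: y = 1 + p*x
      refine ⟨1 + p * x, ⟨x, by ring⟩, ?_⟩
      have h3 := aux_key p hp hodd 1 le_rfl 1 ((p : ℤ) * x) ⟨x, by rw [pow_one]⟩
      have e : ((1 : ℤ) + (p:ℤ) * x) ^ p - 1 ^ p - (p:ℤ) * 1 ^ (p - 1) * ((p:ℤ) * x)
          = (1 + (p:ℤ) * x) ^ p - (1 + (p:ℤ) ^ 2 * x) := by ring
      rw [e] at h3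
      exact (pow_dvd_pow _ (by omega)).trans h3
    · obtain ⟨y, hy1, hy2⟩ := ih hm
      obtain ⟨t, ht⟩ := hy2
      refine ⟨y + p ^ m * (-t), ?_, ?_⟩
      · obtain ⟨u, hu⟩ := hy1
        refine ⟨u + (p:ℤ) ^ (m - 1) * (-t), ?_⟩
        have hps : (p:ℤ) ^ m = p * (p:ℤ) ^ (m - 1) := by
          rw [← pow_succ']; congr 1; omega
        rw [hps]; linarith [hu]
      · have hkey := aux_key p hp hodd m hm y ((p:ℤ) ^ m * (-t)) ⟨-t, rfl⟩
        have hyp1 : (p:ℤ) ∣ y ^ (p - 1) - 1 := by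
          have h4 : y - 1 ∣ y ^ (p - 1) - 1 ^ (p - 1) := sub_dvd_pow_sub_pow y 1 (p - 1)
          rw [one_pow] at h4
          exact hy1.trans h4
        obtain ⟨w, hw⟩ := hyp1
        have heq : (y + (p:ℤ) ^ m * (-t)) ^ p - (1 + (p:ℤ) ^ 2 * x)
            = ((y + (p:ℤ) ^ m * (-t)) ^ p - y ^ p - (p:ℤ) * y ^ (p - 1) * ((p:ℤ) ^ m * (-t)))
              - (p:ℤ) ^ (m + 2) * (w * t) := by
          linear_combination ht - (p:ℤ)^(m+1) * t * hw
        rw [heq]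
        exact dvd_sub hkey (Dvd.intro _ rfl)

lemma aux_uniq (p : ℕ) (hp : p.Prime) (hodd : Odd p) (m : ℕ) (hm : 1 ≤ m) (x : ℤ)
    (y₁ y₂ : ℤ) (h1 : (p:ℤ) ^ (m + 1) ∣ y₁ ^ p - (1 + p ^ 2 * x))
    (h2 : (p:ℤ) ^ (m + 1) ∣ y₂ ^ p - (1 + p ^ 2 * x)) :
    (p:ℤ) ^ m ∣ y₁ - y₂ := by
  haveI : Fact p.Prime := ⟨hp⟩
  have hpI : Prime (p : ℤ) := Nat.prime_iff_prime_int.mp hp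
  -- each y ≡ 1 mod p
  have hone : ∀ y : ℤ, (p:ℤ) ^ (m + 1) ∣ y ^ p - (1 + p ^ 2 * x) → (p:ℤ) ∣ y - 1 := by
    intro y hy
    have hA : (p:ℤ) ∣ y ^ p - (1 + p ^ 2 * x) := (dvd_pow_self _ (by omega)).trans hy
    have hB : (p:ℤ) ∣ y ^ p - y := by
      have : ((y ^ p - y : ℤ) : ZMod p) = 0 := by
        push_cast
        rw [ZMod.pow_card]
        ring
      exact_mod_cast (ZMod.intCast_zmod_eq_zero_iff_dvd _ p).mp this
    have hC : (p:ℤ) ∣ (p:ℤ) ^ 2 * x := ⟨p * x, by ring⟩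
    have hD := dvd_sub (dvd_sub hA hB) (dvd_neg.mpr hC)
    have e : y ^ p - (1 + (p:ℤ) ^ 2 * x) - (y ^ p - y) - -((p:ℤ) ^ 2 * x) = y - 1 := by ring
    rwa [e] at hD
  have hy1 := hone y₁ h1
  have hy2 := hone y₂ h2
  have hpy2 : ¬ (p:ℤ) ∣ y₂ := by
    intro hd
    have h1' : (p:ℤ) ∣ 1 := by
      have := dvd_sub hd hy2
      have e : y₂ - (y₂ - 1) = 1 := by ring
      rwa [e] at this
    have := Int.le_of_dvd one_pos h1'
    have := hp.two_le
    omega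
  have hdiff : (p:ℤ) ^ (m + 1) ∣ y₁ ^ p - y₂ ^ p := by
    have := dvd_sub h1 h2
    have e : y₁ ^ p - (1 + (p:ℤ) ^ 2 * x) - (y₂ ^ p - (1 + (p:ℤ) ^ 2 * x)) = y₁ ^ p - y₂ ^ p := by
      ring
    rwa [e] at this
  -- induction: p^(j+1) ∣ y₁ - y₂ for all j+1 ≤ m
  have claim : ∀ j : ℕ, j + 1 ≤ m → (p:ℤ) ^ (j + 1) ∣ y₁ - y₂ := by
    intro j
    induction j with
    | zero =>
      intro _
      rw [pow_one]
      have := dvd_sub hy1 hy2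
      have e : y₁ - 1 - (y₂ - 1) = y₁ - y₂ := by ring
      rwa [e] at this
    | succ j ihj =>
      intro hj
      obtain ⟨t, htd⟩ := ihj (by omega)
      have hkey := aux_key p hp hodd (j + 1) (by omega) y₂ ((p:ℤ) ^ (j + 1) * t) ⟨t, rfl⟩
      have e1 : y₂ + (p:ℤ) ^ (j + 1) * t = y₁ := by linarith [htd]
      rw [e1] at hkey
      have h3 : (p:ℤ) ^ (j + 3) ∣ y₁ ^ p - y₂ ^ p := (pow_dvd_pow _ (by omega)).trans hdiff
      have h5 : (p:ℤ) ^ (j + 3) ∣ (p:ℤ) ^ (j + 2) * (y₂ ^ (p - 1) * t) := by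
        have := dvd_sub h3 hkey
        have e : y₁ ^ p - y₂ ^ p - (y₁ ^ p - y₂ ^ p - (p:ℤ) * y₂ ^ (p - 1) * ((p:ℤ) ^ (j + 1) * t))
            = (p:ℤ) ^ (j + 2) * (y₂ ^ (p - 1) * t) := by ring
        rwa [e] at this
      have h6 : (p:ℤ) ∣ y₂ ^ (p - 1) * t := by
        have hne : ((p:ℤ) ^ (j + 2)) ≠ 0 := pow_ne_zero _ (by exact_mod_cast hp.ne_zero)
        have e : (p:ℤ) ^ (j + 3) = (p:ℤ) ^ (j + 2) * (p:ℤ) := by ring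
        rw [e] at h5
        exact (mul_dvd_mul_iff_left hne).mp h5
      rcases hpI.dvd_mul.mp h6 with h7 | h7
      · exact absurd (hpI.dvd_of_dvd_pow h7) hpy2
      · obtain ⟨s, rfl⟩ := h7
        exact ⟨s, by rw [htd]; ring⟩
  have := claim (m - 1) (by omega)
  have e : m - 1 + 1 = m := by omega
  rwa [e] at this

theorem stmt_13 (p : ℕ) (hp : p.Prime) (hodd : Odd p) (m : ℕ) (hm : 1 ≤ m) (x : ℤ) :
    (∃ y : ℤ, (y : ZMod (p ^ (m + 1))) ^ p = 1 + (p : ZMod (p ^ (m + 1))) ^ 2 * (x : ZMod (p ^ (m + 1)))) ∧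
    (∀ y₁ y₂ : ℤ,
      (y₁ : ZMod (p ^ (m + 1))) ^ p = 1 + (p : ZMod (p ^ (m + 1))) ^ 2 * (x : ZMod (p ^ (m + 1))) →
      (y₂ : ZMod (p ^ (m + 1))) ^ p = 1 + (p : ZMod (p ^ (m + 1))) ^ 2 * (x : ZMod (p ^ (m + 1))) →
      (y₁ : ZMod (p ^ m)) = (y₂ : ZMod (p ^ m))) := by
  have hiff : ∀ y : ℤ,
      ((y : ZMod (p ^ (m + 1))) ^ p = 1 + (p : ZMod (p ^ (m + 1))) ^ 2 * (x : ZMod (p ^ (m + 1))))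
        ↔ (p:ℤ) ^ (m + 1) ∣ y ^ p - (1 + p ^ 2 * x) := by
    intro y
    have h0 : ((y ^ p - (1 + (p:ℤ) ^ 2 * x) : ℤ) : ZMod (p ^ (m + 1))) = 0
        ↔ (p:ℤ) ^ (m + 1) ∣ y ^ p - (1 + (p:ℤ) ^ 2 * x) := by
      rw [ZMod.intCast_zmod_eq_zero_iff_dvd]
      push_cast
      rfl
    rw [← h0]
    push_cast
    rw [sub_eq_zero]
  constructor
  · obtain ⟨y, _, hy⟩ := aux_ex p hp hodd x m hm
    exact ⟨y, (hiff y).mpr hy⟩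
  · intro y₁ y₂ h1 h2
    have hd : (p:ℤ) ^ m ∣ y₁ - y₂ :=
      aux_uniq p hp hodd m hm x y₁ y₂ ((hiff y₁).mp h1) ((hiff y₂).mp h2)
    have : ((y₁ - y₂ : ℤ) : ZMod (p ^ m)) = 0 := by
      rw [ZMod.intCast_zmod_eq_zero_iff_dvd]
      push_cast
      exact hd
    push_cast at this
    linear_combination this
end

section
/- Let p be a prime and define I : ZMod p → ZMod p → ZMod p by I(t, x) = -Σ_{i=0}^{p-2} x^{p-1-i} · t^{i+1} · (i+1)⁻¹, where (i+1)⁻¹ is the inverse of the image of i+1 in ZMod p. Then for all t, x in ZMod p, I(t, x) = -I(x, t). -/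
/-- The modular integration kernel `I(t, x) = -∑_{i=0}^{p-2} x^(p-1-i) t^(i+1) (i+1)⁻¹`. -/
def modularKernel (p : ℕ) (t x : ZMod p) : ZMod p :=
  -∑ i ∈ Finset.range (p - 1), x ^ (p - 1 - i) * t ^ (i + 1) * ((i : ZMod p) + 1)⁻¹

theorem stmt_14 (p : ℕ) (hp : p.Prime) (t x : ZMod p) :
    modularKernel p t x = -modularKernel p x t := by
  haveI : Fact p.Prime := ⟨hp⟩
  unfold modularKernel
  rw [neg_neg, ← Finset.sum_range_reflect, ← Finset.sum_neg_distrib]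
  refine Finset.sum_congr rfl fun i hi => ?_
  rw [Finset.mem_range] at hi
  have hp2 : 2 ≤ p := hp.two_le
  have h1 : p - 1 - (p - 1 - 1 - i) = i + 1 := by omega
  have h2 : p - 1 - 1 - i + 1 = p - 1 - i := by omega
  rw [h1, h2]
  have h3 : ((p - 1 - 1 - i : ℕ) : ZMod p) + 1 = -(((i : ZMod p)) + 1) := by
    have : ((p - 1 - 1 - i : ℕ) + 1 : ℕ) + (i + 1) = p := by omega
    have := congrArg (Nat.cast : ℕ → ZMod p) this
    push_cast at this
    rw [ZMod.natCast_self] at this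
    linear_combination this
  rw [h3, inv_neg]
  ring
end

section
/- Let p be a prime and let f be a polynomial with coefficients in ZMod p of degree at most p-2. Then for every x in ZMod p, the value of the formal derivative of f at x satisfies f'(x) = -Σ_{t ∈ ZMod p} f(t) · (t - x)^{p-2}, the sum being over all p elements t of ZMod p. -/
open Polynomial Finset

lemma aux_sum_eval_15 (p : ℕ) [Fact p.Prime] (h : Polynomial (ZMod p))
    (hh : h.natDegree < p - 1) : ∑ t : ZMod p, h.eval t = 0 := by
  have hcard : Fintype.card (ZMod p) = p := ZMod.card p
  calc ∑ t : ZMod p, h.eval t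
      = ∑ t : ZMod p, ∑ i ∈ Finset.range (h.natDegree + 1), h.coeff i * t ^ i := by
        simp [Polynomial.eval_eq_sum_range]
    _ = ∑ i ∈ Finset.range (h.natDegree + 1), ∑ t : ZMod p, h.coeff i * t ^ i :=
        Finset.sum_comm
    _ = 0 := by
        apply Finset.sum_eq_zero
        intro i hi
        rw [← Finset.mul_sum]
        have : (∑ t : ZMod p, t ^ i) = 0 := by
          apply FiniteField.sum_pow_lt_card_sub_one
          rw [hcard]
          have := Finset.mem_range.mp hi
          omega
        rw [this, mul_zero]

theorem stmt_15 (p : ℕ) [Fact p.Prime] (f : Polynomial (ZMod p))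
    (hf : f.degree ≤ (p - 2 : ℕ)) (x : ZMod p) :
    f.derivative.eval x = -∑ t : ZMod p, f.eval t * (t - x) ^ (p - 2) := by
  have hp2 : 2 ≤ p := (Fact.out : p.Prime).two_le
  set a := f.eval x with ha
  obtain ⟨g, hg⟩ : X - C x ∣ f - C a := X_sub_C_dvd_sub_C_eval
  -- degree bound on g
  have hgdeg : g.natDegree < p - 1 := by
    rcases eq_or_ne g 0 with h0 | h0
    · simp [h0]; omega
    have h1 : (f - C a).degree ≤ (p - 2 : ℕ) :=
      le_trans (Polynomial.degree_sub_le _ _)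
        (max_le hf (le_trans Polynomial.degree_C_le (by exact_mod_cast Nat.zero_le _)))
    rw [hg] at h1
    rw [Polynomial.degree_mul, Polynomial.degree_X_sub_C] at h1
    rw [Polynomial.degree_eq_natDegree h0] at h1
    have h2 : 1 + g.natDegree ≤ p - 2 := by exact_mod_cast h1
    omega
  -- f = C a + (X - C x) * g
  have hf_eq : f = C a + (X - C x) * g := by
    rw [← hg]; ring
  -- derivative at x
  have hderiv : f.derivative.eval x = g.eval x := by
    rw [hf_eq]
    simp [Polynomial.derivative_mul]
  -- eval formula
  have heval : ∀ t : ZMod p, f.eval t = (t - x) * g.eval t + a := by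
    intro t
    rw [hf_eq]; simp; ring
  -- sum of (t-x)^(p-2)
  have hsum1 : ∑ t : ZMod p, (t - x) ^ (p - 2) = 0 := by
    rw [Fintype.sum_equiv (Equiv.subRight x) (fun t => (t - x) ^ (p - 2))
      (fun s => s ^ (p - 2)) (fun t => rfl)]
    apply FiniteField.sum_pow_lt_card_sub_one
    rw [ZMod.card p]; omega
  -- sum of g(t)(t-x)^(p-1)
  have hsum2 : ∑ t : ZMod p, g.eval t * (t - x) ^ (p - 1) = -g.eval x := by
    have key : ∀ t : ZMod p, g.eval t * (t - x) ^ (p - 1)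
        = g.eval t - (if t = x then g.eval x else 0) := by
      intro t
      rcases eq_or_ne t x with rfl | hne
      · simp [zero_pow (by omega : p - 1 ≠ 0)]
      · have : (t - x) ^ (p - 1) = 1 :=
          ZMod.pow_card_sub_one_eq_one (sub_ne_zero_of_ne hne)
        simp [this, hne]
    simp only [key]
    rw [Finset.sum_sub_distrib, aux_sum_eval_15 p g hgdeg, Finset.sum_ite_eq' Finset.univ x]
    simp
  calc f.derivative.eval x = g.eval x := hderiv
    _ = -∑ t : ZMod p, f.eval t * (t - x) ^ (p - 2) := by
        have : ∑ t : ZMod p, f.eval t * (t - x) ^ (p - 2)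
            = ∑ t : ZMod p, (g.eval t * (t - x) ^ (p - 1) + a * (t - x) ^ (p - 2)) := by
          apply Finset.sum_congr rfl
          intro t _
          rw [heval t]
          have hpow : (t - x) ^ (p - 1) = (t - x) * (t - x) ^ (p - 2) := by
            rw [← pow_succ']
            congr 1
            omega
          rw [hpow]; ring
        rw [this, Finset.sum_add_distrib, hsum2, ← Finset.mul_sum, hsum1, mul_zero, add_zero,
          neg_neg]
end

section
/- Let p be a prime, let I : ZMod p → ZMod p → ZMod p be defined by I(t, x) = -Σ_{i=0}^{p-2} x^{p-1-i} · t^{i+1} · (i+1)⁻¹, and let f = Σ_{j=0}^{p-2} c_j X^j be a polynomial over ZMod p of degree at most p-2. Then for every t in ZMod p, Σ_{x ∈ ZMod p} f(x) · I(t, x) = Σ_{j=0}^{p-2} c_j · t^{j+1} · (j+1)⁻¹; that is, the sum Σ_x f(x) I(t,x) equals the formal antiderivative of f, normalized to vanish at 0, evaluated at t. -/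
open Finset

lemma sum_pow_zmod (p : ℕ) [Fact p.Prime] (i : ℕ) (hi : i ≠ 0) :
    ∑ x : ZMod p, x ^ i = if (p - 1) ∣ i then -1 else 0 := by
  classical
  let φ : (ZMod p)ˣ ↪ ZMod p := ⟨fun x ↦ x, Units.val_injective⟩
  have hmap : univ.map φ = univ \ {0} := by
    ext x
    simpa only [mem_map, mem_univ, Function.Embedding.coeFn_mk, true_and, mem_sdiff,
      mem_singleton, φ] using (⟨fun ⟨u, hu⟩ => isUnit_iff_ne_zero.mp ⟨u, hu⟩,
        fun h => let ⟨u, hu⟩ := isUnit_iff_ne_zero.mpr h; ⟨u, hu⟩⟩ :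
        (∃ a : (ZMod p)ˣ, (a : ZMod p) = x) ↔ ¬x = 0)
  have h1 : ∑ x : ZMod p, x ^ i = ∑ x ∈ univ \ {(0 : ZMod p)}, x ^ i := by
    rw [← Finset.sum_sdiff ({0} : Finset (ZMod p)).subset_univ, Finset.sum_singleton,
      zero_pow hi, add_zero]
  have h2 : ∑ x ∈ univ \ {(0 : ZMod p)}, x ^ i = ∑ x : (ZMod p)ˣ, (x : ZMod p) ^ i := by
    rw [← hmap, Finset.sum_map]
    rfl
  have h3 := FiniteField.sum_pow_units (ZMod p) i
  rw [ZMod.card] at h3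
  rw [h1, h2, h3]

lemma key (p : ℕ) [Fact p.Prime] (i j : ℕ) (hi : i < p - 1) (hj : j < p - 1) :
    ∑ x : ZMod p, x ^ j * x ^ (p - 1 - i) = if i = j then -1 else 0 := by
  have hp : 2 ≤ p := (Fact.out : p.Prime).two_le
  have hne : j + (p - 1 - i) ≠ 0 := by omega
  have h := sum_pow_zmod p (j + (p - 1 - i)) hne
  simp only [← pow_add, h]
  by_cases h : i = j
  · rw [if_pos h, if_pos]; subst h; exact ⟨1, by omega⟩
  · rw [if_neg h, if_neg]
    rintro ⟨k, hk⟩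
    have hk1 : k ≠ 0 := by rintro rfl; omega
    have hk2 : k < 2 := by
      by_contra h2
      push_neg at h2
      have : (p - 1) * 2 ≤ (p - 1) * k := Nat.mul_le_mul_left _ h2
      omega
    interval_cases k <;> omega

theorem stmt_16 (p : ℕ) [Fact p.Prime] (c : ℕ → ZMod p) (t : ZMod p) :
    ∑ x : ZMod p, (∑ j ∈ Finset.range (p - 1), c j * x ^ j) * modularKernel p t x
      = ∑ j ∈ Finset.range (p - 1), c j * t ^ (j + 1) * ((j : ZMod p) + 1)⁻¹ := by
  unfold modularKernel
  have step : ∀ x : ZMod p,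
      (∑ j ∈ Finset.range (p - 1), c j * x ^ j) *
        (-∑ i ∈ Finset.range (p - 1), x ^ (p - 1 - i) * t ^ (i + 1) * ((i : ZMod p) + 1)⁻¹)
      = ∑ j ∈ Finset.range (p - 1), ∑ i ∈ Finset.range (p - 1),
          -(c j * (t ^ (i + 1) * ((i : ZMod p) + 1)⁻¹)) * (x ^ j * x ^ (p - 1 - i)) := by
    intro x
    rw [mul_neg, Finset.sum_mul_sum, ← Finset.sum_neg_distrib]
    apply Finset.sum_congr rfl; intro j _
    rw [← Finset.sum_neg_distrib]
    apply Finset.sum_congr rfl; intro i _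
    ring
  simp only [step]
  rw [Finset.sum_comm]
  apply Finset.sum_congr rfl
  intro j hj
  rw [Finset.sum_comm]
  rw [Finset.sum_eq_single j]
  · rw [← Finset.mul_sum, key p j j (Finset.mem_range.mp hj) (Finset.mem_range.mp hj),
      if_pos rfl]
    ring
  · intro i hi hij
    rw [← Finset.mul_sum, key p i j (Finset.mem_range.mp hi) (Finset.mem_range.mp hj),
      if_neg (by exact fun h => hij (h ▸ rfl)), mul_zero]
  · intro h; exact (h hj).elim
end
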